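/- The additive subgroup of F generated by the image of S equals F if and only if the only subspaces W of F, viewed as a vector space over its prime field F_p, which satisfy s·W ⊆ W for every s ∈ S are W = 0 and W = F. -/

import Mathlib

/-- Let `p` be prime, `e ≥ 1`, `q = p^e`, `F` a finite field with `q`
elements, `n` a divisor of `q - 1`, and `S` the subgroup of order `n` of `Fˣ`.
The additive subgroup of `F` generated by the image of `S` equals `F` if and only if
the only subspaces `W` of `F`, viewed as a vector space over its prime field `F_p`,
satisfying `s • W ⊆ W` for all `s ∈ S`, are `W = 0` and `W = F`
(i.e. `S` acts irreducibly on `F`). -/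
theorem addClosure_image_eq_top_iff_irreducible
    (p e n : ℕ) (hp : p.Prime) (he : 1 ≤ e)
    (F : Type) [Field F] [Fintype F] (hq : Fintype.card F = p ^ e)
    [Module (ZMod p) F]
    (hn : n ∣ p ^ e - 1)
    (S : Subgroup Fˣ) (hS : Nat.card S = n) :
    AddSubgroup.closure (Units.val '' (S : Set Fˣ)) = ⊤ ↔
      ∀ W : Submodule (ZMod p) F,
        (∀ s ∈ S, ∀ w ∈ W, (s : Fˣ) • w ∈ W) → W = ⊥ ∨ W = ⊤ := by
  haveI : Fact p.Prime := ⟨hp⟩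
  constructor
  · intro htop W hW
    by_cases hbot : W = ⊥
    · exact Or.inl hbot
    right
    obtain ⟨w, hwW, hw0⟩ := W.exists_mem_ne_zero_of_ne_bot hbot
    have key : ∀ x ∈ AddSubgroup.closure (Units.val '' (S : Set Fˣ)), x * w ∈ W := by
      intro x hx
      have hle : AddSubgroup.closure (Units.val '' (S : Set Fˣ)) ≤
          (W.toAddSubgroup).comap (AddMonoidHom.mulRight w) := by
        rw [AddSubgroup.closure_le]
        rintro _ ⟨s, hs, rfl⟩
        simpa [Units.smul_def, smul_eq_mul] using hW s hs w hwW
      exact hle hx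
    rw [eq_top_iff]
    intro y _
    have hy := key (y * w⁻¹) (htop ▸ AddSubgroup.mem_top _)
    rwa [mul_assoc, inv_mul_cancel₀ hw0, mul_one] at hy
  · intro h
    set A := AddSubgroup.closure (Units.val '' (S : Set Fˣ)) with hA
    have hsmulA : ∀ s ∈ S, ∀ x ∈ A, (s : F) * x ∈ A := by
      intro s hs
      have hle : A ≤ A.comap (AddMonoidHom.mulLeft (s : F)) := by
        rw [hA, AddSubgroup.closure_le]
        rintro _ ⟨t, ht, rfl⟩
        exact AddSubgroup.subset_closure ⟨s * t, S.mul_mem hs ht, rfl⟩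
      intro x hx
      exact hle hx
    let W : Submodule (ZMod p) F :=
      { carrier := A
        add_mem' := fun ha hb => A.add_mem ha hb
        zero_mem' := A.zero_mem
        smul_mem' := fun c x hx => by
          have h1 : ((c.val : ZMod p)) • x ∈ A := by
            rw [Nat.cast_smul_eq_nsmul]
            exact A.nsmul_mem hx c.val
          rwa [show ((c.val : ZMod p)) = c by simp [ZMod.natCast_val, ZMod.cast_id]] at h1 }
    have hWstab : ∀ s ∈ S, ∀ w ∈ W, (s : Fˣ) • w ∈ W := by
      intro s hs w hw
      rw [Units.smul_def, smul_eq_mul]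
      exact hsmulA s hs w hw
    rcases h W hWstab with hb | ht
    · exfalso
      have h1 : (1 : F) ∈ W := AddSubgroup.subset_closure ⟨1, S.one_mem, rfl⟩
      rw [hb] at h1
      simpa using h1
    · rw [eq_top_iff]
      intro x _
      exact (ht ▸ Submodule.mem_top : x ∈ W)
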